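/- Let s be a positive integer with gcd(s, m) = 1, and let C ⊆ F_{q^m}^n be a linear rank-metric code of dimension k ≥ 2 over F_{q^m} whose minimum rank distance is at least k. If dim_{F_{q^m}}(C ∩ C^{[s]}) = k − 1, then there exist elements g_1, …, g_n ∈ F_{q^m} such that C is the F_{q^m}-span of the k Moore vectors (g_1^{[si]}, …, g_n^{[si]}) for i = 0, 1, …, k − 1. -/

import Mathlib

open Matrix

/-- The rank over the subfield `Fq` of a vector with entries in `K`:
the `Fq`-dimension of the `Fq`-span of its coordinates. -/
noncomputable def rankQ (Fq : Type) {K : Type} [Field Fq] [Field K] [Algebra Fq K] {n : ℕ}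
    (v : Fin n → K) : ℕ :=
  Module.finrank Fq (Submodule.span Fq (Set.range v))

/-- The minimum rank distance of a linear rank-metric code `C ⊆ K^n`. -/
noncomputable def minRankDist (Fq : Type) {K : Type} [Field Fq] [Field K] [Algebra Fq K] {n : ℕ}
    (C : Submodule K (Fin n → K)) : ℕ :=
  sInf (rankQ Fq '' {c : Fin n → K | c ∈ C ∧ c ≠ 0})

/-- A linear code `C ⊆ K^n` of dimension `k` over `K` is MRD if its minimum
rank distance equals `n - k + 1`. -/
def IsMRD (Fq : Type) {K : Type} [Field Fq] [Field K] [Algebra Fq K] {n : ℕ}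
    (C : Submodule K (Fin n → K)) (k : ℕ) : Prop :=
  Module.finrank K C = k ∧ minRankDist Fq C = n - k + 1

/-- `G` is a generator matrix of `C`: its rows form a `K`-basis of `C`. -/
def IsGenMat {K : Type} [Field K] {k n : ℕ} (C : Submodule K (Fin n → K))
    (G : Matrix (Fin k) (Fin n) K) : Prop :=
  LinearIndependent K (fun i => G i) ∧ Submodule.span K (Set.range fun i => G i) = C


set_option linter.unusedSectionVars false
set_option linter.unusedVariables false
set_option maxHeartbeats 1000000

section Aux
variable {q m s : ℕ} {Fq K : Type} [Field Fq] [Fintype Fq] [Field K] [Fintype K] [Algebra Fq K]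

lemma frob_add (hq : Fintype.card Fq = q) (r : ℕ) (x y : K) :
    (x + y) ^ q ^ r = x ^ q ^ r + y ^ q ^ r := by
  obtain ⟨p, hp⟩ := CharP.exists Fq
  have hpK : CharP K p := charP_of_injective_algebraMap (algebraMap Fq K).injective p
  obtain ⟨e, hprime, hqe⟩ := FiniteField.card Fq p
  rw [hq] at hqe
  have : q ^ r = p ^ ((e : ℕ) * r) := by rw [hqe, ← pow_mul]
  rw [this]
  haveI : Fact p.Prime := ⟨hprime⟩
  exact add_pow_char_pow x y p (e * r)

/-- Frobenius `x ↦ x ^ q ^ r` as a ring hom. -/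
noncomputable def frobQ (hq : Fintype.card Fq = q) (r : ℕ) : K →+* K where
  toFun x := x ^ q ^ r
  map_one' := one_pow _
  map_mul' x y := mul_pow x y _
  map_zero' := by
    have h2 : 2 ≤ q := hq ▸ Fintype.one_lt_card
    have : q ^ r ≠ 0 := by positivity
    exact zero_pow this
  map_add' := frob_add hq r

lemma frobQ_apply (hq : Fintype.card Fq = q) (r : ℕ) (x : K) :
    frobQ (K := K) hq r x = x ^ q ^ r := rfl

lemma algebraMap_pow_q (hq : Fintype.card Fq = q) (c : Fq) :
    (algebraMap Fq K c) ^ q = algebraMap Fq K c := by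
  rw [← map_pow]
  congr 1
  rw [← hq]
  exact FiniteField.pow_card c

lemma algebraMap_pow_q_pow (hq : Fintype.card Fq = q) (c : Fq) (t : ℕ) :
    (algebraMap Fq K c) ^ q ^ t = algebraMap Fq K c := by
  induction t with
  | zero => simp
  | succ t ih => rw [pow_succ, pow_mul, ih, algebraMap_pow_q hq]

lemma frob_smul (hq : Fintype.card Fq = q) (r : ℕ) (c : Fq) (x : K) :
    (c • x) ^ q ^ r = c • (x ^ q ^ r) := by
  rw [Algebra.smul_def, Algebra.smul_def, mul_pow, algebraMap_pow_q_pow hq]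

/-- The `q^s`-linearized operator with coefficients `a 0, …, a t`. -/
noncomputable def linOp (hq : Fintype.card Fq = q) (s : ℕ) (a : ℕ → K) (t : ℕ) :
    K →ₗ[Fq] K where
  toFun x := ∑ i ∈ Finset.range (t + 1), a i * x ^ q ^ (s * i)
  map_add' x y := by
    rw [← Finset.sum_add_distrib]
    exact Finset.sum_congr rfl fun i _ => by rw [frob_add hq (s*i) x y, mul_add]
  map_smul' c x := by
    simp only [RingHom.id_apply, Finset.smul_sum]
    exact Finset.sum_congr rfl fun i _ => by
      rw [frob_smul hq (s*i) c x, Algebra.smul_def, Algebra.smul_def]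
      ring

lemma linOp_apply (hq : Fintype.card Fq = q) (s : ℕ) (a : ℕ → K) (t : ℕ) (x : K) :
    linOp hq s a t x = ∑ i ∈ Finset.range (t + 1), a i * x ^ q ^ (s * i) := rfl

/-- fixed points of `x ↦ x ^ q` lie in the image of `Fq`. -/
lemma fixed_mem_range (hq : Fintype.card Fq = q) (x : K) (hx : x ^ q = x) :
    ∃ c : Fq, algebraMap Fq K c = x := by
  classical
  have hq2 : 2 ≤ q := hq ▸ Fintype.one_lt_card
  set f : Polynomial K := Polynomial.X ^ q - Polynomial.X with hf
  have hdeg : f.natDegree = q := by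
    rw [hf]
    rw [Polynomial.natDegree_sub_eq_left_of_natDegree_lt] <;>
      simp [Polynomial.natDegree_X_pow, hq2, Nat.lt_of_lt_of_le one_lt_two hq2]
  have hf0 : f ≠ 0 := by
    intro h
    have := hdeg
    rw [h] at this
    simp at this
    omega
  have hroot : ∀ y : K, y ^ q = y → y ∈ f.roots.toFinset := by
    intro y hy
    simp only [Multiset.mem_toFinset, Polynomial.mem_roots hf0, Polynomial.IsRoot.def, hf]
    simp [hy]
    exact hf0
  set S : Finset K := Finset.univ.image (algebraMap Fq K) with hS
  have hcardS : S.card = q := by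
    rw [hS, Finset.card_image_of_injective _ (algebraMap Fq K).injective, Finset.card_univ, hq]
  have hsub : S ⊆ f.roots.toFinset := by
    intro y hy
    rw [hS, Finset.mem_image] at hy
    obtain ⟨c, -, rfl⟩ := hy
    exact hroot _ (algebraMap_pow_q hq c)
  have hcardT : f.roots.toFinset.card ≤ q := by
    calc f.roots.toFinset.card ≤ Multiset.card f.roots := f.roots.toFinset_card_le
    _ ≤ f.natDegree := Polynomial.card_roots' f
    _ = q := hdeg
  have hST : S = f.roots.toFinset := Finset.eq_of_subset_of_card_le hsub (hcardT.trans hcardS.ge)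
  have : x ∈ S := hST ▸ hroot x hx
  rw [hS, Finset.mem_image] at this
  obtain ⟨c, -, hc⟩ := this
  exact ⟨c, hc⟩

/-- fixed points of `x ↦ x ^ q ^ s` lie in the image of `Fq` when `gcd s m = 1`. -/
lemma fixedS_mem_range (hq : Fintype.card Fq = q) (hK : Fintype.card K = q ^ m)
    (hgcd : Nat.gcd s m = 1) (x : K) (hx : x ^ q ^ s = x) :
    ∃ c : Fq, algebraMap Fq K c = x := by
  have hq2 : 2 ≤ q := hq ▸ Fintype.one_lt_card
  have hm : m ≠ 0 := by
    rintro rfl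
    rw [pow_zero] at hK
    have := Fintype.one_lt_card (α := K)
    omega
  have hiter : ∀ b : ℕ, x ^ q ^ (s * b) = x := by
    intro b
    induction b with
    | zero => simp
    | succ b ih =>
      have h1 : s * (b + 1) = s * b + s := by ring
      rw [h1, pow_add, pow_mul, ih, hx]
  have hmd : ∀ d : ℕ, x ^ q ^ (m * d) = x := by
    intro d
    have := FiniteField.pow_card_pow (K := K) d x
    rwa [hK, ← pow_mul] at this
  have hxq : x ^ q = x := by
    rcases Nat.eq_or_lt_of_le (Nat.one_le_iff_ne_zero.mpr hm) with h1 | h1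
    · have := hmd 1
      rwa [← h1, one_mul, pow_one] at this
    · obtain ⟨b, -, hb⟩ := Nat.exists_mul_mod_eq_one_of_coprime hgcd h1
      have hdiv : s * b = m * (s * b / m) + 1 := by
        conv_lhs => rw [← Nat.div_add_mod (s * b) m]
        rw [hb]
      have := hiter b
      rw [hdiv, pow_add, pow_one, pow_mul, hmd] at this
      exact this
  exact fixed_mem_range hq x hxq


/-- The key lemma: the kernel of a nonzero `q^s`-linearized operator of degree `t`
has `Fq`-dimension at most `t`. -/
lemma ker_linOp_finrank_le (hq : Fintype.card Fq = q) (hK : Fintype.card K = q ^ m)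
    (hgcd : Nat.gcd s m = 1) :
    ∀ (t : ℕ) (a : ℕ → K), a t ≠ 0 →
      Module.finrank Fq (LinearMap.ker (linOp (K := K) hq s a t)) ≤ t := by
  haveI : FiniteDimensional Fq K := Module.Finite.of_finite
  intro t
  induction t with
  | zero =>
    intro a ha
    have : LinearMap.ker (linOp (K := K) hq s a 0) = ⊥ := by
      rw [LinearMap.ker_eq_bot']
      intro x hx
      rw [linOp_apply, Finset.sum_range_succ, Finset.sum_range_zero, zero_add] at hx
      rw [Nat.mul_zero, pow_zero, pow_one] at hx
      rcases mul_eq_zero.mp hx with h | h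
      · exact absurd h ha
      · exact h
    rw [this, finrank_bot]
  | succ t ih =>
    intro a ha
    by_cases hV : LinearMap.ker (linOp (K := K) hq s a (t + 1)) = ⊥
    · rw [hV, finrank_bot]; omega
    obtain ⟨v, hv, hv0⟩ := (Submodule.ne_bot_iff _).mp hV
    rw [LinearMap.mem_ker] at hv
    set c : K := v ^ q ^ s / v with hc
    have hcv : c * v = v ^ q ^ s := by
      rw [hc, div_mul_eq_mul_div, mul_div_assoc, div_self hv0, mul_one]
    -- the degree-one operator D x = x^{q^s} - c x
    set d : ℕ → K := fun i => if i = 0 then -c else 1 with hd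
    set D : K →ₗ[Fq] K := linOp hq s d 1 with hD
    have hDapply : ∀ x : K, D x = x ^ q ^ s - c * x := by
      intro x
      rw [hD, linOp_apply]
      rw [Finset.sum_range_succ, Finset.sum_range_one]
      simp only [hd]
      norm_num
      ring
    have hDv : D v = 0 := by rw [hDapply, hcv, sub_self]
    -- the quotient coefficients b, defined by downward recursion
    set bb : ℕ → K := fun j => Nat.rec (a (t + 1))
      (fun j bj => a (t - j) + bj * c ^ q ^ (s * (t - j))) j with hbb
    set b : ℕ → K := fun i => bb (t - i) with hb
    have hbt : b t = a (t + 1) := by simp [hb, hbb]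
    have hbrec : ∀ i, i < t → b i = a (i + 1) + b (i + 1) * c ^ q ^ (s * (i + 1)) := by
      intro i hi
      have h1 : t - i = (t - (i + 1)) + 1 := by omega
      have h2 : t - (t - (i + 1)) = i + 1 := by omega
      rw [hb]
      simp only
      rw [h1]
      show a (t - (t - (i+1))) + bb (t - (i+1)) * c ^ q ^ (s * (t - (t - (i+1)))) = _
      rw [h2]
    -- the division identity
    have key : ∀ x : K, linOp hq s a (t + 1) x
        = linOp hq s b t (D x) + (a 0 + b 0 * c) * x := by
      intro x
      rw [linOp_apply, linOp_apply]
      have hterm : ∀ i : ℕ, b i * (D x) ^ q ^ (s * i)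
          = b i * x ^ q ^ (s * (i + 1)) - (b i * c ^ q ^ (s * i)) * x ^ q ^ (s * i) := by
        intro i
        rw [hDapply]
        have hsub : (x ^ q ^ s - c * x) ^ q ^ (s * i)
            = (x ^ q ^ s) ^ q ^ (s * i) - (c * x) ^ q ^ (s * i) :=
          map_sub (frobQ hq (s * i)) _ _
        rw [hsub, mul_pow, ← pow_mul, ← pow_add]
        have : q ^ s * q ^ (s * i) = q ^ (s * (i + 1)) := by
          rw [← pow_add]; congr 1; ring
        rw [← pow_mul] at *
        have h2 : s + s * i = s * (i + 1) := by ring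
        rw [h2]
        ring
      rw [Finset.sum_congr rfl fun i _ => hterm i]
      rw [Finset.sum_sub_distrib]
      -- LHS: split off the first term  ∑_{i<t+2} = ∑_{i<t+1} (i+1) + i=0
      rw [Finset.sum_range_succ' (fun i => a i * x ^ q ^ (s * i)) (t + 1)]
      -- first RHS sum: split off the last term
      rw [Finset.sum_range_succ (fun i => b i * x ^ q ^ (s * (i + 1))) t]
      -- second RHS sum: split off the first term
      rw [Finset.sum_range_succ' (fun i => b i * c ^ q ^ (s * i) * x ^ q ^ (s * i)) t]
      -- LHS remaining sum: split off the last term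
      rw [Finset.sum_range_succ (fun i => a (i + 1) * x ^ q ^ (s * (i + 1))) t]
      have hcomb : ∑ i ∈ Finset.range t, a (i + 1) * x ^ q ^ (s * (i + 1))
          = ∑ i ∈ Finset.range t, b i * x ^ q ^ (s * (i + 1))
            - ∑ i ∈ Finset.range t, b (i + 1) * c ^ q ^ (s * (i + 1)) * x ^ q ^ (s * (i + 1)) := by
        rw [← Finset.sum_sub_distrib]
        refine Finset.sum_congr rfl fun i hi => ?_
        rw [hbrec i (Finset.mem_range.mp hi)]
        ring
      rw [hcomb, hbt]
      simp only [Nat.mul_zero, pow_zero, pow_one]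
      ring
    -- a 0 + b 0 * c = 0
    have haux : a 0 + b 0 * c = 0 := by
      have h1 := key v
      rw [hv, hDv, map_zero, zero_add] at h1
      exact (mul_eq_zero.mp h1.symm).resolve_right hv0
    -- D maps ker(linOp a (t+1)) into ker(linOp b t)
    set f := D.domRestrict (LinearMap.ker (linOp (K := K) hq s a (t + 1))) with hfdef
    have hrange : LinearMap.range f ≤ LinearMap.ker (linOp (K := K) hq s b t) := by
      rintro y ⟨⟨x, hx⟩, rfl⟩
      rw [LinearMap.mem_ker] at hx ⊢
      have := key x
      rw [hx, haux, zero_mul, add_zero] at this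
      rw [hfdef]
      exact this.symm
    -- kernel of f has dimension ≤ 1
    have hkerf : Module.finrank Fq (LinearMap.ker f) ≤ 1 := by
      have hmaple : (LinearMap.ker f).map
          (LinearMap.ker (linOp (K := K) hq s a (t + 1))).subtype ≤ Submodule.span Fq {v} := by
        rintro y ⟨⟨x, hx⟩, hxker, rfl⟩
        have hxker' : x ^ q ^ s - c * x = 0 := by
          have h0 : D x = 0 := hxker
          rwa [hDapply] at h0
        -- x ^ q^s = c x  ⇒  x / v fixed by frobenius
        have hfix : (x / v) ^ q ^ s = x / v := by
          rw [div_pow, ← hcv]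
          rw [sub_eq_zero] at hxker'
          rw [hxker']
          have hc0 : c ≠ 0 := by
            rw [hc]
            apply div_ne_zero _ hv0
            exact pow_ne_zero _ hv0
          rw [mul_div_mul_left _ _ hc0]
        obtain ⟨e, he⟩ := fixedS_mem_range hq hK hgcd _ hfix
        have : x = e • v := by
          rw [Algebra.smul_def, he, div_mul_cancel₀ _ hv0]
        rw [Submodule.coe_subtype]
        simp only
        rw [this]
        exact Submodule.smul_mem _ _ (Submodule.mem_span_singleton_self v)
      calc Module.finrank Fq (LinearMap.ker f)
          = Module.finrank Fq ((LinearMap.ker f).map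
            (LinearMap.ker (linOp (K := K) hq s a (t + 1))).subtype) :=
            (Submodule.finrank_map_subtype_eq _ _).symm
        _ ≤ Module.finrank Fq (Submodule.span Fq {v}) := Submodule.finrank_mono hmaple
        _ ≤ 1 := by rw [finrank_span_singleton hv0]
    have hrangef : Module.finrank Fq (LinearMap.range f) ≤ t := by
      have hbt0 : b t ≠ 0 := hbt ▸ ha
      exact le_trans (Submodule.finrank_mono hrange) (ih b hbt0)
    have := LinearMap.finrank_range_add_finrank_ker f
    omega

end Aux

section Main
variable {q m s n : ℕ} {Fq K : Type} [Field Fq] [Fintype Fq] [Field K] [Fintype K] [Algebra Fq K]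

/-- coordinatewise Frobenius of a vector -/
noncomputable def sigmaV (q s : ℕ) (v : Fin n → K) : Fin n → K := fun j => v j ^ q ^ s

lemma sigmaV_injective (hq : Fintype.card Fq = q) :
    Function.Injective (sigmaV (K := K) (n := n) q s) := by
  intro u w h
  funext j
  have := congrFun h j
  exact (frobQ (K := K) hq s).injective this

lemma frobQ_surjective (hq : Fintype.card Fq = q) (r : ℕ) :
    Function.Surjective (frobQ (K := K) hq r) :=
  (Finite.injective_iff_surjective.mp (frobQ (K := K) hq r).injective)

/-- the image of a submodule under coordinatewise Frobenius, as a submodule -/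
noncomputable def mapF (hq : Fintype.card Fq = q) (s : ℕ) (U : Submodule K (Fin n → K)) :
    Submodule K (Fin n → K) where
  carrier := sigmaV q s '' U
  add_mem' := by
    rintro x y ⟨u, hu, rfl⟩ ⟨w, hw, rfl⟩
    exact ⟨u + w, U.add_mem hu hw,
      funext fun j => by simp [sigmaV, frob_add hq s (u j) (w j)]⟩
  zero_mem' := ⟨0, U.zero_mem, funext fun j => by
    show (0 : K) ^ q ^ s = 0
    exact map_zero (frobQ (K := K) hq s)⟩
  smul_mem' := by
    rintro a x ⟨u, hu, rfl⟩
    obtain ⟨b, hb⟩ := frobQ_surjective hq s a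
    refine ⟨b • u, U.smul_mem b hu, funext fun j => ?_⟩
    show (b * u j) ^ q ^ s = a * (u j) ^ q ^ s
    have hb' : b ^ q ^ s = a := hb
    rw [mul_pow, hb']

lemma mapF_coe (hq : Fintype.card Fq = q) (U : Submodule K (Fin n → K)) :
    (mapF hq s U : Set (Fin n → K)) = sigmaV q s '' U := rfl

lemma mapF_mono (hq : Fintype.card Fq = q) {U V : Submodule K (Fin n → K)} (h : U ≤ V) :
    mapF hq s U ≤ mapF hq s V := by
  rintro x ⟨u, hu, rfl⟩
  exact ⟨u, h hu, rfl⟩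

lemma finrank_mapF (hq : Fintype.card Fq = q) (hK : Fintype.card K = q ^ m)
    (U : Submodule K (Fin n → K)) :
    Module.finrank K (mapF hq s U) = Module.finrank K U := by
  classical
  have hq2 : 2 ≤ q := hq ▸ Fintype.one_lt_card
  have hK2 : 2 ≤ Fintype.card K := Fintype.one_lt_card
  haveI : Fintype ↥(mapF hq s U) := Fintype.ofFinite _
  haveI : Fintype ↥U := Fintype.ofFinite _
  have hcard : Fintype.card ↥(mapF hq s U) = Fintype.card ↥U := by
    rw [← Nat.card_eq_fintype_card, ← Nat.card_eq_fintype_card]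
    have h' : Nat.card ↥(sigmaV q s '' (U : Set (Fin n → K)))
        = Nat.card ↥(U : Set (Fin n → K)) := by
      rw [Nat.card_coe_set_eq, Nat.card_coe_set_eq,
        Set.ncard_image_of_injective _ (sigmaV_injective hq)]
    exact h'
  have h1 : Fintype.card ↥(mapF hq s U)
      = Fintype.card K ^ Module.finrank K (mapF hq s U) := Module.card_eq_pow_finrank
  have h2 : Fintype.card ↥U = Fintype.card K ^ Module.finrank K U := Module.card_eq_pow_finrank
  rw [h1, h2] at hcard
  exact Nat.pow_right_injective hK2 hcard

end Main

/-- if `C` has dimension `k ≥ 2`, minimum rank distance at least `k`,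
and `dim(C ∩ C^[s]) = k - 1`, then `C` is spanned by `k` Moore vectors. -/
theorem stmt8 {q m s n k : ℕ} (Fq K : Type) [Field Fq] [Fintype Fq] [Field K] [Fintype K]
    [Algebra Fq K] (hq : Fintype.card Fq = q) (hK : Fintype.card K = q ^ m)
    (hs : 0 < s) (hgcd : Nat.gcd s m = 1)
    (C : Submodule K (Fin n → K)) (hk : 2 ≤ k) (hdim : Module.finrank K C = k)
    (hdist : ∀ c ∈ C, c ≠ 0 → k ≤ rankQ Fq c)
    (hint : Module.finrank K
        (C ⊓ Submodule.span K
          ((fun v : Fin n → K => fun j => (v j) ^ q ^ s) '' (C : Set (Fin n → K))) :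
        Submodule K (Fin n → K)) = k - 1) :
    ∃ g : Fin n → K,
      C = Submodule.span K
        (Set.range fun i : Fin k => fun j : Fin n => (g j) ^ q ^ (s * (i : ℕ))) := by
  classical
  haveI : FiniteDimensional Fq K := Module.Finite.of_finite
  haveI : FiniteDimensional K (Fin n → K) := Module.Finite.of_finite
  have hq2 : 2 ≤ q := hq ▸ Fintype.one_lt_card
  -- rewrite the intersection hypothesis in terms of `mapF`
  have hspan : Submodule.span K
      ((fun v : Fin n → K => fun j => (v j) ^ q ^ s) '' (C : Set (Fin n → K)))
      = mapF hq s C := by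
    have he : ((fun v : Fin n → K => fun j => (v j) ^ q ^ s) '' (C : Set (Fin n → K)))
        = (mapF hq s C : Set (Fin n → K)) := rfl
    rw [he, Submodule.span_eq]
  rw [hspan] at hint
  -- the chain of intersections
  set Uc : ℕ → Submodule K (Fin n → K) :=
    fun i => Nat.rec C (fun _ U => C ⊓ mapF hq s U) i with hUc
  have hUc0 : Uc 0 = C := rfl
  have hUcsucc : ∀ i, Uc (i + 1) = C ⊓ mapF hq s (Uc i) := fun i => rfl
  have hUle : ∀ i, Uc i ≤ C := by
    intro i
    cases i with
    | zero => exact le_rfl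
    | succ i => rw [hUcsucc]; exact inf_le_left
  have hsupC : Module.finrank K (C ⊔ mapF hq s C : Submodule K (Fin n → K)) = k + 1 := by
    have h := Submodule.finrank_sup_add_finrank_inf_eq C (mapF hq s C)
    rw [hint, hdim, finrank_mapF hq hK] at h
    omega
  have hrank : ∀ i, k - i ≤ Module.finrank K (Uc i) := by
    intro i
    induction i with
    | zero => rw [hUc0, hdim]; omega
    | succ i ih =>
      have h := Submodule.finrank_sup_add_finrank_inf_eq C (mapF hq s (Uc i))
      rw [← hUcsucc, hdim, finrank_mapF hq hK] at h
      have hle : Module.finrank K (C ⊔ mapF hq s (Uc i) : Submodule K (Fin n → K)) ≤ k + 1 := by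
        rw [← hsupC]
        exact Submodule.finrank_mono (sup_le_sup_left (mapF_mono hq (hUle i)) C)
      omega
  -- extraction of the Moore generator
  have hextract : ∀ i, ∀ w, w ∈ Uc i → ∃ g : Fin n → K,
      (∀ l ≤ i, (fun j => g j ^ q ^ (s * l)) ∈ C) ∧ (fun j => g j ^ q ^ (s * i)) = w := by
    intro i
    induction i with
    | zero =>
      intro w hw
      refine ⟨w, ?_, ?_⟩
      · intro l hl
        interval_cases l
        have hw0 : (fun j => w j ^ q ^ (s * 0)) = w := funext fun j => by
          rw [Nat.mul_zero, pow_zero, pow_one]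
        rw [hw0]
        exact hUc0 ▸ hw
      · exact funext fun j => by rw [Nat.mul_zero, pow_zero, pow_one]
    | succ i ih =>
      intro w hw
      rw [hUcsucc] at hw
      obtain ⟨hwC, u, hu, hsu⟩ := hw
      obtain ⟨g, hgC, hgu⟩ := ih u hu
      have hkey : (fun j => g j ^ q ^ (s * (i + 1))) = w := by
        funext j
        have h1 : u j = g j ^ q ^ (s * i) := (congrFun hgu j).symm
        have h2 : w j = u j ^ q ^ s := (congrFun hsu j).symm
        have h3 : s * (i + 1) = s * i + s := by ring
        rw [h2, h1, ← pow_mul, ← pow_add, h3]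
      refine ⟨g, ?_, hkey⟩
      intro l hl
      rcases Nat.lt_or_ge l (i + 1) with h | h
      · exact hgC l (by omega)
      · have : l = i + 1 := by omega
        rw [this, hkey]
        exact hwC
  -- pick a nonzero element at level k-1
  have h1 : 1 ≤ Module.finrank K (Uc (k - 1)) := by
    have := hrank (k - 1)
    omega
  have hne : Uc (k - 1) ≠ ⊥ := by
    intro h
    rw [h, finrank_bot] at h1
    omega
  obtain ⟨w, hw, hw0⟩ := (Submodule.ne_bot_iff _).mp hne
  obtain ⟨g, hgC, hgw⟩ := hextract (k - 1) w hw
  have hg0 : g ≠ 0 := by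
    rintro rfl
    apply hw0
    rw [← hgw]
    funext j
    show (0 : K) ^ q ^ (s * (k - 1)) = 0
    exact zero_pow (by positivity)
  have hgmemC : g ∈ C := by
    have := hgC 0 (by omega)
    have he : (fun j => g j ^ q ^ (s * 0)) = g := funext fun j => by
      rw [Nat.mul_zero, pow_zero, pow_one]
    rwa [he] at this
  -- the Moore family
  set mv : Fin k → (Fin n → K) := fun i => fun j => g j ^ q ^ (s * (i : ℕ)) with hmv
  have hmvC : ∀ i : Fin k, mv i ∈ C := fun i => hgC (i : ℕ) (by omega)
  have hli : LinearIndependent K mv := by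
    by_contra hnli
    obtain ⟨co, hsum, i0, hi0⟩ := Fintype.not_linearIndependent_iff.mp hnli
    set T := Finset.univ.filter (fun i : Fin k => co i ≠ 0) with hT
    have hTne : T.Nonempty := ⟨i0, by simp [hT, hi0]⟩
    set t := T.max' hTne with ht
    have htmem : t ∈ T := T.max'_mem hTne
    have hta : co t ≠ 0 := by
      rw [hT, Finset.mem_filter] at htmem
      exact htmem.2
    have htmax : ∀ i : Fin k, co i ≠ 0 → i ≤ t := fun i hi =>
      T.le_max' i (by simp [hT, hi])
    set a : ℕ → K := fun i => if h : i < k then co ⟨i, h⟩ else 0 with ha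
    have hat : a (t : ℕ) ≠ 0 := by
      rw [ha]
      simpa [t.isLt] using hta
    have hker : ∀ j : Fin n, g j ∈ LinearMap.ker (linOp hq s a (t : ℕ)) := by
      intro j
      rw [LinearMap.mem_ker, linOp_apply]
      have hfin : ∑ i : Fin k, co i * (g j) ^ q ^ (s * (i : ℕ)) = 0 := by
        have hsj := congrFun hsum j
        simpa [hmv, Finset.sum_apply] using hsj
      calc ∑ i ∈ Finset.range ((t : ℕ) + 1), a i * (g j) ^ q ^ (s * i)
          = ∑ i ∈ Finset.range k, a i * (g j) ^ q ^ (s * i) := by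
            refine Finset.sum_subset ?_ ?_
            · exact Finset.range_subset_range.mpr (by have := t.isLt; omega)
            · intro x hx hnx
              have hxk : x < k := Finset.mem_range.mp hx
              rw [ha]
              simp only [dif_pos hxk]
              by_contra hne'
              rcases mul_ne_zero_iff.mp hne' with ⟨hc0, -⟩
              have : (⟨x, hxk⟩ : Fin k) ≤ t := htmax ⟨x, hxk⟩ hc0
              exact hnx (Finset.mem_range.mpr (by
                have : x ≤ (t : ℕ) := this
                omega))
        _ = ∑ i : Fin k, co i * (g j) ^ q ^ (s * (i : ℕ)) := by
            rw [← Fin.sum_univ_eq_sum_range (fun i => a i * (g j) ^ q ^ (s * i)) k]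
            exact Finset.sum_congr rfl fun i _ => by
              rw [ha]; simp [i.isLt]
        _ = 0 := hfin
    have hspanle : Submodule.span Fq (Set.range g)
        ≤ LinearMap.ker (linOp (K := K) hq s a (t : ℕ)) :=
      Submodule.span_le.mpr (by rintro x ⟨j, rfl⟩; exact hker j)
    have hrq : rankQ Fq g ≤ (t : ℕ) :=
      le_trans (Submodule.finrank_mono hspanle)
        (ker_linOp_finrank_le hq hK hgcd (t : ℕ) a hat)
    have hd := hdist g hgmemC hg0
    have htk : (t : ℕ) < k := t.isLt
    rw [rankQ] at hrq
    rw [rankQ] at hd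
    omega
  have hVle : Submodule.span K (Set.range mv) ≤ C :=
    Submodule.span_le.mpr (by rintro x ⟨i, rfl⟩; exact hmvC i)
  have hVrank : Module.finrank K (Submodule.span K (Set.range mv)) = k := by
    rw [finrank_span_eq_card hli, Fintype.card_fin]
  exact ⟨g, (Submodule.eq_of_le_of_finrank_le hVle (by rw [hVrank, hdim])).symm⟩
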